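/- If κ ≥ 2ℓ_g, then for all u, v ∈ V one has ⟨u − v, g_κ(v) − (1/2)·L_κ(u + v)⟩ ≤ E[v] − E[u]. -/

import Mathlib

open scoped RealInnerProductSpace NNReal

/-- If `κ ≥ 2ℓ_g`, then `⟨u − v, g_κ(v) − (1/2)·L_κ(u + v)⟩ ≤ E[v] − E[u]`. -/
theorem stmt_1
    {V : Type*} [NormedAddCommGroup V] [InnerProductSpace ℝ V] [FiniteDimensional ℝ V]
    (L : V →ₗ[ℝ] V)
    (hLsymm : ∀ x y : V, ⟪L x, y⟫ = ⟪x, L y⟫)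
    (hLpos : ∀ x : V, 0 ≤ ⟪x, L x⟫)
    (G : V → ℝ) (gradG : V → V)
    (hG : ∀ x, HasGradientAt G (gradG x) x)
    (ℓ : ℝ≥0) (hℓ : 0 < ℓ)
    (hLip : LipschitzWith ℓ gradG)
    (κ : ℝ) (hκ : 2 * (ℓ : ℝ) ≤ κ)
    (E : V → ℝ) (hE : ∀ v, E v = (1/2) * ⟪v, L v⟫ + G v)
    (Lκ : V → V) (hLκ : ∀ v, Lκ v = L v + κ • v)
    (gκ : V → V) (hgκ : ∀ v, gκ v = -gradG v + κ • v)
    (u v : V) :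
    ⟪u - v, gκ v - (1/2 : ℝ) • Lκ (u + v)⟫ ≤ E v - E u := by
  -- Descent-type lemma from Lipschitz gradient
  have hdesc : G u - G v - ⟪gradG v, u - v⟫ ≤ (ℓ : ℝ) * (‖u - v‖ * ‖u - v‖) := by
    have bound : ∀ x ∈ segment ℝ v u,
        ‖(InnerProductSpace.toDual ℝ V (gradG x) : V →L[ℝ] ℝ)
          - (InnerProductSpace.toDual ℝ V (gradG v) : V →L[ℝ] ℝ)‖ ≤ (ℓ : ℝ) * ‖u - v‖ := by
      intro x hx
      have hxv : ‖x - v‖ ≤ ‖u - v‖ := by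
        obtain ⟨a, b, ha, hb, hab, rfl⟩ := hx
        have : a • v + b • u - v = b • (u - v) := by
          have : a = 1 - b := by linarith
          subst this
          simp [sub_smul, smul_sub]
          abel
        rw [this, norm_smul]
        simp only [Real.norm_eq_abs, abs_of_nonneg hb]
        nlinarith [norm_nonneg (u - v), hb]
      have h1 : ‖gradG x - gradG v‖ ≤ (ℓ : ℝ) * ‖x - v‖ := by
        have := hLip.dist_le_mul x v
        simpa [dist_eq_norm] using this
      have h2 : (InnerProductSpace.toDual ℝ V (gradG x) : V →L[ℝ] ℝ)
          - (InnerProductSpace.toDual ℝ V (gradG v) : V →L[ℝ] ℝ)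
          = (InnerProductSpace.toDual ℝ V (gradG x - gradG v) : V →L[ℝ] ℝ) := by
        simp [map_sub]
      rw [h2]
      have h3 : ‖(InnerProductSpace.toDual ℝ V (gradG x - gradG v) : V →L[ℝ] ℝ)‖
          = ‖gradG x - gradG v‖ := (InnerProductSpace.toDual ℝ V).norm_map _
      rw [h3]
      calc ‖gradG x - gradG v‖ ≤ (ℓ : ℝ) * ‖x - v‖ := h1
        _ ≤ (ℓ : ℝ) * ‖u - v‖ := by
            exact mul_le_mul_of_nonneg_left hxv (by positivity)
    have h := Convex.norm_image_sub_le_of_norm_hasFDerivWithin_le'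
      (f := G) (s := segment ℝ v u)
      (f' := fun x => (InnerProductSpace.toDual ℝ V (gradG x) : V →L[ℝ] ℝ))
      (φ := (InnerProductSpace.toDual ℝ V (gradG v) : V →L[ℝ] ℝ))
      (C := (ℓ : ℝ) * ‖u - v‖) (x := v) (y := u)
      (fun x _ => (hasGradientAt_iff_hasFDerivAt.mp (hG x)).hasFDerivWithinAt)
      bound (convex_segment v u) (left_mem_segment ℝ v u) (right_mem_segment ℝ v u)
    have h' : |G u - G v - ⟪gradG v, u - v⟫| ≤ (ℓ : ℝ) * ‖u - v‖ * ‖u - v‖ := by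
      have hφ : (InnerProductSpace.toDual ℝ V (gradG v) : V →L[ℝ] ℝ) (u - v)
          = ⟪gradG v, u - v⟫ := rfl
      simpa [Real.norm_eq_abs, hφ] using h
    calc G u - G v - ⟪gradG v, u - v⟫ ≤ |G u - G v - ⟪gradG v, u - v⟫| := le_abs_self _
      _ ≤ (ℓ : ℝ) * ‖u - v‖ * ‖u - v‖ := h'
      _ = (ℓ : ℝ) * (‖u - v‖ * ‖u - v‖) := by ring
  -- Algebraic identities
  have hsymuv : ⟪v, L u⟫ = ⟪u, L v⟫ := by
    rw [← hLsymm v u, real_inner_comm]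
  have hnorm : ‖u - v‖ * ‖u - v‖ = ⟪u - v, u - v⟫ := (real_inner_self_eq_norm_mul_norm _).symm
  have hκℓ : (ℓ : ℝ) * (‖u - v‖ * ‖u - v‖) ≤ (κ / 2) * ⟪u - v, u - v⟫ := by
    rw [← hnorm]
    have hnn : 0 ≤ ‖u - v‖ * ‖u - v‖ := by positivity
    nlinarith
  have hinner : ⟪gradG v, u - v⟫ = ⟪u - v, gradG v⟫ := real_inner_comm _ _
  simp only [hE, hLκ, hgκ]
  simp only [inner_sub_left, inner_sub_right, inner_add_left, inner_add_right,
    real_inner_smul_right, real_inner_smul_left, inner_neg_right, inner_neg_left,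
    smul_add, smul_smul, map_add, LinearMap.map_smul, smul_sub]
  have hexp : ⟪u - v, u - v⟫ = ⟪u, u⟫ - ⟪u, v⟫ - ⟪v, u⟫ + ⟪v, v⟫ := by
    simp only [inner_sub_left, inner_sub_right]; ring
  rw [hexp] at hκℓ
  have huv : ⟪v, u⟫ = ⟪u, v⟫ := real_inner_comm _ _
  simp only [inner_sub_right] at hdesc
  have e1 : ⟪gradG v, u⟫ = ⟪u, gradG v⟫ := real_inner_comm _ _
  have e2 : ⟪gradG v, v⟫ = ⟪v, gradG v⟫ := real_inner_comm _ _
  rw [e1, e2] at hdesc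
  linarith [hdesc, hκℓ, hsymuv, huv]
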